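/- arXiv:2004.07918 — 2 statements merged into one kernel-verified Lean document; each statement's English description precedes it below -/
import Mathlib

section
/- In a (d,k,r,x)-squid H, any k-power dominating set must contain at least one vertex from each spine; hence γ_p^k(H) ≥ d. -/
/-- A hypergraph on vertex type `V`, given by its finite set of (finite) edges. -/
structure Hypergraph' (V : Type*) where
  edges : Finset (Finset V)

namespace Hypergraph'

variable {V : Type*}

/-- Two vertices are adjacent iff they are distinct and share an edge. -/
def Adj (H : Hypergraph' V) (u v : V) : Prop :=
  u ≠ v ∧ ∃ e ∈ H.edges, u ∈ e ∧ v ∈ e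

/-- The underlying adjacency (simple) graph of a hypergraph. -/
def graph (H : Hypergraph' V) : SimpleGraph V where
  Adj := H.Adj
  symm := by
    refine ⟨?_⟩
    rintro u v ⟨hne, e, he, hu, hv⟩
    exact ⟨hne.symm, e, he, hv, hu⟩
  loopless := by
    refine ⟨?_⟩
    rintro u ⟨hne, -⟩
    exact hne rfl

/-- Closed neighborhood of a set of vertices. -/
def closedNbhd (H : Hypergraph' V) (S : Set V) : Set V :=
  S ∪ {u | ∃ v ∈ S, H.Adj v u}

/-- `F` is a set of edges through `v` covering all neighbors of `v` outside `S`. -/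
def Covers (H : Hypergraph' V) (v : V) (S : Set V) (F : Finset (Finset V)) : Prop :=
  F ⊆ H.edges ∧ (∀ e ∈ F, v ∈ e) ∧ ∀ u, H.Adj v u → u ∉ S → ∃ e ∈ F, u ∈ e

/-- The white degree of `v` with respect to the blue set `S`: the minimum number of
edges containing `v` that cover all neighbors of `v` outside `S`. -/
noncomputable def wdeg (H : Hypergraph' V) (v : V) (S : Set V) : ℕ :=
  sInf {t | ∃ F, H.Covers v S F ∧ F.card ≤ t}

/-- One step of the `k`-forcing propagation: every blue vertex whose white
neighbors can be covered by at most `k` incident edges forces its neighbors blue. -/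
def step (H : Hypergraph' V) (k : ℕ) (S : Set V) : Set V :=
  S ∪ {u | ∃ v ∈ S, H.Adj v u ∧ H.wdeg v S ≤ k}

/-- `D` is a `k`-power dominating set if iterating the propagation from `N[D]`
colors every vertex blue. -/
def IsPDS (H : Hypergraph' V) (k : ℕ) (D : Set V) : Prop :=
  ∃ t : ℕ, (H.step k)^[t] (H.closedNbhd D) = Set.univ

/-- The `k`-power domination number. -/
noncomputable def pdn (H : Hypergraph' V) (k : ℕ) : ℕ :=
  sInf {t | ∃ D : Finset V, H.IsPDS k ↑D ∧ D.card ≤ t}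

/-- A dominating set. -/
def Dominating (H : Hypergraph' V) (S : Set V) : Prop :=
  H.closedNbhd S = Set.univ

/-- The domination number. -/
noncomputable def gamma (H : Hypergraph' V) : ℕ :=
  sInf {t | ∃ D : Finset V, H.Dominating ↑D ∧ D.card ≤ t}

/-- An `r`-uniform hypergraph. -/
def Uniform (H : Hypergraph' V) (r : ℕ) : Prop :=
  ∀ e ∈ H.edges, e.card = r

/-- Connectivity of the underlying adjacency graph. -/
def Connected (H : Hypergraph' V) : Prop := H.graph.Connected

/-- No isolated vertices: every vertex lies in some edge. -/
def NoIsolated (H : Hypergraph' V) : Prop :=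
  ∀ v : V, ∃ e ∈ H.edges, v ∈ e

/-- External private neighbors of `v` with respect to `D`. -/
def epn (H : Hypergraph' V) (v : V) (D : Set V) : Set V :=
  {u | u ∉ D ∧ H.Adj v u ∧ ∀ w ∈ D, w ≠ v → ¬ H.Adj w u}

/-- Number of connected components of the subhypergraph induced on `D`
(with respect to adjacency within `D`). -/
noncomputable def numComponents (H : Hypergraph' V) (D : Set V) : ℕ :=
  Nat.card (SimpleGraph.ConnectedComponent (SimpleGraph.induce D H.graph))

end Hypergraph'

/-- A `(d,k,r,x)`-squid structure on a hypergraph `H`: `d` spines, the `i`-th spine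
having `r - x i` strong and `k + x i` weak vertices, with `k+1` in-spine edges each
containing all the strong vertices of the spine, together covering the spine's weak
vertices, no proper subfamily covering them; every edge containing a weak vertex is
one of its spine's edges, `H` is `r`-uniform and connected. -/
structure Squid {V : Type*} [Fintype V] [DecidableEq V] (H : Hypergraph' V)
    (d k r : ℕ) (x : Fin d → ℕ) where
  strong : Fin d → Finset V
  weak : Fin d → Finset V
  spineEdges : Fin d → Finset (Finset V)
  x_pos : ∀ i, 1 ≤ x i
  x_le : ∀ i, x i ≤ r - 1
  strong_card : ∀ i, (strong i).card = r - x i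
  weak_card : ∀ i, (weak i).card = k + x i
  strong_weak_disj : ∀ i, Disjoint (strong i) (weak i)
  spine_disj : ∀ i j, i ≠ j → Disjoint (strong i ∪ weak i) (strong j ∪ weak j)
  vertex_partition :
    (Finset.univ : Finset V) = Finset.univ.biUnion (fun i => strong i ∪ weak i)
  spineEdges_sub : ∀ i, spineEdges i ⊆ H.edges
  spineEdges_card : ∀ i, (spineEdges i).card = k + 1
  spineEdges_strong : ∀ i, ∀ e ∈ spineEdges i, strong i ⊆ e ∧ e ⊆ strong i ∪ weak i
  spineEdges_cover : ∀ i, weak i ⊆ (spineEdges i).biUnion id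
  no_proper_cover : ∀ i, ∀ F ⊂ spineEdges i, ¬ weak i ⊆ F.biUnion id
  weak_edge_in_spine : ∀ e ∈ H.edges, ∀ i, (∃ w ∈ weak i, w ∈ e) → e ∈ spineEdges i
  uniform : H.Uniform r
  connected : H.Connected

open Hypergraph' in
/-- In a `(d,k,r,x)`-squid, every `k`-power dominating set contains a
vertex of each spine; hence `γ_p^k(H) ≥ d`. -/
theorem squid_pdn_lower {V : Type*} [Fintype V] [DecidableEq V] (H : Hypergraph' V)
    (d k r : ℕ) (x : Fin d → ℕ) (hd : 1 ≤ d) (hk : 1 ≤ k) (hr : 2 ≤ r)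
    (sq : Squid H d k r x) :
    (∀ D : Finset V, H.IsPDS k ↑D → ∀ i : Fin d, ∃ v ∈ D, v ∈ sq.strong i ∪ sq.weak i) ∧
    d ≤ H.pdn k := by
  classical
  have main : ∀ D : Finset V, H.IsPDS k ↑D →
      ∀ i : Fin d, ∃ v ∈ D, v ∈ sq.strong i ∪ sq.weak i := by
    intro D hD i
    by_contra hmiss
    push_neg at hmiss
    -- any vertex adjacent to a weak vertex of spine i lies in spine i
    have hvspine : ∀ (u w : V), w ∈ sq.weak i → H.Adj u w → u ∈ sq.strong i ∪ sq.weak i := by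
      rintro u w hw ⟨hne, e, he, hu, hwe⟩
      have hsp := sq.weak_edge_in_spine e he i ⟨w, hw, hwe⟩
      exact (sq.spineEdges_strong i e hsp).2 hu
    -- every strong vertex of spine i is adjacent to every weak vertex of spine i
    have hadjall : ∀ v ∈ sq.strong i, ∀ w ∈ sq.weak i, H.Adj v w := by
      intro v hv w hw
      obtain ⟨e, he, hwe⟩ := Finset.mem_biUnion.mp (sq.spineEdges_cover i hw)
      have hvne : v ≠ w := by
        intro h
        exact Finset.disjoint_left.mp (sq.strong_weak_disj i) hv (h ▸ hw)
      exact ⟨hvne, e, sq.spineEdges_sub i he, (sq.spineEdges_strong i e he).1 hv, hwe⟩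
    -- extract a covering family from a wdeg bound
    have hwdeg : ∀ (v : V) (S : Set V), H.wdeg v S ≤ k →
        ∃ F, H.Covers v S F ∧ F.card ≤ k := by
      intro v S h
      have hne : {t | ∃ F, H.Covers v S F ∧ F.card ≤ t}.Nonempty := by
        refine ⟨(H.edges.filter (fun e => v ∈ e)).card,
          H.edges.filter (fun e => v ∈ e), ⟨Finset.filter_subset _ _,
          fun e he => (Finset.mem_filter.mp he).2, ?_⟩, le_rfl⟩
        rintro u ⟨hneq, e, he, hv, hu⟩ _
        exact ⟨e, Finset.mem_filter.mpr ⟨he, hv⟩, hu⟩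
      obtain ⟨F, hF, hcard⟩ := Nat.sInf_mem hne
      exact ⟨F, hF, hcard.trans h⟩
    -- key: a strong vertex of an untouched spine can never force
    have key : ∀ (S : Set V), (∀ w ∈ sq.weak i, w ∉ S) →
        ∀ v ∈ sq.strong i, ¬ (H.wdeg v S ≤ k) := by
      intro S hS v hv hle
      obtain ⟨F, ⟨hFsub, hFv, hFcov⟩, hFcard⟩ := hwdeg v S hle
      set F' := F ∩ sq.spineEdges i with hF'
      have hcov : sq.weak i ⊆ F'.biUnion id := by
        intro w hw
        obtain ⟨e, heF, hwe⟩ := hFcov w (hadjall v hv w hw) (hS w hw)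
        have hsp : e ∈ sq.spineEdges i :=
          sq.weak_edge_in_spine e (hFsub heF) i ⟨w, hw, hwe⟩
        exact Finset.mem_biUnion.mpr ⟨e, Finset.mem_inter.mpr ⟨heF, hsp⟩, hwe⟩
      have hsub : F' ⊆ sq.spineEdges i := Finset.inter_subset_right
      have heq : F' = sq.spineEdges i := by
        by_contra hneq
        exact sq.no_proper_cover i F' (hsub.ssubset_of_ne hneq) hcov
      have hge : k + 1 ≤ F.card := by
        calc k + 1 = (sq.spineEdges i).card := (sq.spineEdges_card i).symm
          _ = F'.card := by rw [heq]
          _ ≤ F.card := Finset.card_le_card Finset.inter_subset_left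
      omega
    -- the invariant: weak vertices of spine i are never colored
    have inv : ∀ t : ℕ, ∀ w ∈ sq.weak i, w ∉ (H.step k)^[t] (H.closedNbhd ↑D) := by
      intro t
      induction t with
      | zero =>
        intro w hw hmem
        rcases hmem with h | ⟨v, hvD, hadj⟩
        · exact hmiss w h (Finset.mem_union_right _ hw)
        · exact hmiss v hvD (hvspine v w hw hadj)
      | succ t ih =>
        rw [Function.iterate_succ_apply']
        intro w hw hmem
        rcases hmem with h | ⟨v, hvS, hadj, hwd⟩
        · exact ih w hw h
        · have hvsp := hvspine v w hw hadj
          have hvstrong : v ∈ sq.strong i := by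
            rcases Finset.mem_union.mp hvsp with h | h
            · exact h
            · exact absurd hvS (ih v h)
          exact key _ (fun w' hw' => ih w' hw') v hvstrong hwd
    obtain ⟨t, ht⟩ := hD
    have hwne : (sq.weak i).Nonempty := by
      rw [← Finset.card_pos, sq.weak_card i]; omega
    obtain ⟨w, hw⟩ := hwne
    exact inv t w hw (by rw [ht]; trivial)
  refine ⟨main, ?_⟩
  have hTne : {t | ∃ D : Finset V, H.IsPDS k ↑D ∧ D.card ≤ t}.Nonempty := by
    refine ⟨(Finset.univ : Finset V).card, Finset.univ, ⟨0, ?_⟩, le_rfl⟩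
    simp only [Function.iterate_zero, id]
    rw [Finset.coe_univ]
    unfold Hypergraph'.closedNbhd
    exact Set.univ_union _
  refine le_csInf hTne ?_
  rintro t ⟨D, hD, hcard⟩
  choose f hfD hfsp using fun i => main D hD i
  have hinj : Function.Injective f := by
    intro i j hij
    by_contra hne
    exact Finset.disjoint_left.mp (sq.spine_disj i j hne) (hfsp i) (hij ▸ hfsp j)
  have : (Finset.univ : Finset (Fin d)).card ≤ D.card :=
    Finset.card_le_card_of_injOn f (fun i _ => hfD i) hinj.injOn
  simpa using this.trans hcard
end

section
/- Let H be an r-uniform hypergraph and let H' be the squid hypergraph of H. Then γ_p^k(H') = |V(H)|. -/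
/-- A hypergraph on vertex type `V`, given by its finite set of (finite) edges. -/
structure FinHypergraph (V : Type*) where
  edges : Finset (Finset V)

namespace FinHypergraph

variable {V : Type*}

/-- Two vertices are adjacent iff they are distinct and share an edge. -/
def Adj (H : FinHypergraph V) (u v : V) : Prop :=
  u ≠ v ∧ ∃ e ∈ H.edges, u ∈ e ∧ v ∈ e

/-- The underlying adjacency (simple) graph of a hypergraph. -/
def graph (H : FinHypergraph V) : SimpleGraph V where
  Adj := H.Adj
  symm := by
    refine ⟨?_⟩
    rintro u v ⟨hne, e, he, hu, hv⟩
    exact ⟨hne.symm, e, he, hv, hu⟩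
  loopless := by
    refine ⟨?_⟩
    rintro u ⟨hne, -⟩
    exact hne rfl

/-- Closed neighborhood of a set of vertices. -/
def closedNbhd (H : FinHypergraph V) (S : Set V) : Set V :=
  S ∪ {u | ∃ v ∈ S, H.Adj v u}

/-- `F` is a set of edges through `v` covering all neighbors of `v` outside `S`. -/
def Covers (H : FinHypergraph V) (v : V) (S : Set V) (F : Finset (Finset V)) : Prop :=
  F ⊆ H.edges ∧ (∀ e ∈ F, v ∈ e) ∧ ∀ u, H.Adj v u → u ∉ S → ∃ e ∈ F, u ∈ e

/-- The white degree of `v` with respect to the blue set `S`: the minimum number of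
edges containing `v` that cover all neighbors of `v` outside `S`. -/
noncomputable def wdeg (H : FinHypergraph V) (v : V) (S : Set V) : ℕ :=
  sInf {t | ∃ F, H.Covers v S F ∧ F.card ≤ t}

/-- One step of the `k`-forcing propagation: every blue vertex whose white
neighbors can be covered by at most `k` incident edges forces its neighbors blue. -/
def step (H : FinHypergraph V) (k : ℕ) (S : Set V) : Set V :=
  S ∪ {u | ∃ v ∈ S, H.Adj v u ∧ H.wdeg v S ≤ k}

/-- `D` is a `k`-power dominating set if iterating the propagation from `N[D]`
colors every vertex blue. -/
def IsPDS (H : FinHypergraph V) (k : ℕ) (D : Set V) : Prop :=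
  ∃ t : ℕ, (H.step k)^[t] (H.closedNbhd D) = Set.univ

/-- The `k`-power domination number. -/
noncomputable def pdn (H : FinHypergraph V) (k : ℕ) : ℕ :=
  sInf {t | ∃ D : Finset V, H.IsPDS k ↑D ∧ D.card ≤ t}

/-- A dominating set. -/
def Dominating (H : FinHypergraph V) (S : Set V) : Prop :=
  H.closedNbhd S = Set.univ

/-- The domination number. -/
noncomputable def gamma (H : FinHypergraph V) : ℕ :=
  sInf {t | ∃ D : Finset V, H.Dominating ↑D ∧ D.card ≤ t}

/-- An `r`-uniform hypergraph. -/
def Uniform (H : FinHypergraph V) (r : ℕ) : Prop :=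
  ∀ e ∈ H.edges, e.card = r

/-- Connectivity of the underlying adjacency graph. -/
def Connected (H : FinHypergraph V) : Prop := H.graph.Connected

/-- No isolated vertices: every vertex lies in some edge. -/
def NoIsolated (H : FinHypergraph V) : Prop :=
  ∀ v : V, ∃ e ∈ H.edges, v ∈ e

/-- External private neighbors of `v` with respect to `D`. -/
def epn (H : FinHypergraph V) (v : V) (D : Set V) : Set V :=
  {u | u ∉ D ∧ H.Adj v u ∧ ∀ w ∈ D, w ≠ v → ¬ H.Adj w u}

/-- Number of connected components of the subhypergraph induced on `D`
(with respect to adjacency within `D`). -/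
noncomputable def numComponents (H : FinHypergraph V) (D : Set V) : ℕ :=
  Nat.card (SimpleGraph.ConnectedComponent (SimpleGraph.induce D H.graph))

end FinHypergraph

variable {V : Type*} [Fintype V] [DecidableEq V]

/-- The vertex type of the squid hypergraph of a hypergraph on `V`: the original
vertices, the `k+1` pendant vertices `v_1, …, v_{k+1}` of each `v`, and the `r-2`
shared leg vertices `v'_1, …, v'_{r-2}` of each `v`. -/
abbrev SquidVert (V : Type*) (k r : ℕ) : Type _ :=
  V ⊕ (V × Fin (k + 1)) ⊕ (V × Fin (r - 2))

/-- The leg edge `e_{v,i} = {v, v'_1, …, v'_{r-2}, v_i}`. -/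
def legEdge (k r : ℕ) (v : V) (i : Fin (k + 1)) : Finset (SquidVert V k r) :=
  insert (Sum.inl v) (insert (Sum.inr (Sum.inl (v, i)))
    ((Finset.univ : Finset (Fin (r - 2))).image fun j => Sum.inr (Sum.inr (v, j))))

/-- The squid hypergraph of `H`: the edges of `H` together with the `k+1` leg edges
attached to every vertex `v` of `H`. -/
def squidOf (H : FinHypergraph V) (k r : ℕ) : FinHypergraph (SquidVert V k r) where
  edges :=
    H.edges.image (fun e => e.image Sum.inl) ∪
      (Finset.univ : Finset (V × Fin (k + 1))).image (fun p => legEdge k r p.1 p.2)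

open FinHypergraph

namespace SquidAux

variable {k r : ℕ} {H : FinHypergraph V}

/-- Base projection: each squid vertex belongs to the gadget of its base vertex. -/
def base : SquidVert V k r → V := Sum.elim id (Sum.elim Prod.fst Prod.fst)

lemma mem_legEdge {v : V} {i : Fin (k + 1)} {x : SquidVert V k r} :
    x ∈ legEdge k r v i ↔
      x = Sum.inl v ∨ x = Sum.inr (Sum.inl (v, i)) ∨ ∃ j, x = Sum.inr (Sum.inr (v, j)) := by
  simp [legEdge, eq_comm]

lemma mem_squid_edges {e : Finset (SquidVert V k r)} :
    e ∈ (squidOf H k r).edges ↔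
      (∃ e0 ∈ H.edges, e = e0.image Sum.inl) ∨ ∃ v i, e = legEdge k r v i := by
  simp [squidOf, eq_comm]

lemma legEdge_mem (v : V) (i : Fin (k + 1)) :
    legEdge k r v i ∈ (squidOf H k r).edges :=
  mem_squid_edges.2 (Or.inr ⟨v, i, rfl⟩)

lemma edge_of_pendant {e : Finset (SquidVert V k r)} {v : V} {i : Fin (k + 1)}
    (he : e ∈ (squidOf H k r).edges) (hx : Sum.inr (Sum.inl (v, i)) ∈ e) :
    e = legEdge k r v i := by
  rcases mem_squid_edges.1 he with ⟨e0, -, rfl⟩ | ⟨w, j, rfl⟩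
  · simp at hx
  · rcases mem_legEdge.1 hx with h | h | ⟨j', h⟩ <;> simp_all

lemma base_of_mem_legEdge {v : V} {i : Fin (k + 1)} {x : SquidVert V k r}
    (hx : x ∈ legEdge k r v i) : base x = v := by
  rcases mem_legEdge.1 hx with rfl | rfl | ⟨j, rfl⟩ <;> rfl

lemma adj_pendant {v : V} {w : SquidVert V k r}
    (hw : w = Sum.inl v ∨ ∃ j, w = Sum.inr (Sum.inr (v, j))) (i : Fin (k + 1)) :
    (squidOf H k r).Adj w (Sum.inr (Sum.inl (v, i))) := by
  refine ⟨?_, legEdge k r v i, legEdge_mem v i, ?_, ?_⟩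
  · rcases hw with rfl | ⟨j, rfl⟩ <;> simp
  · rcases hw with rfl | ⟨j, rfl⟩ <;> [exact mem_legEdge.2 (Or.inl rfl);
      exact mem_legEdge.2 (Or.inr (Or.inr ⟨j, rfl⟩))]
  · exact mem_legEdge.2 (Or.inr (Or.inl rfl))

lemma legEdge_injective (v : V) :
    Function.Injective fun i : Fin (k + 1) => (legEdge k r v i : Finset (SquidVert V k r)) := by
  intro a b hab
  have hab' : legEdge k r v a = legEdge k r v b := hab
  have : (Sum.inr (Sum.inl (v, a)) : SquidVert V k r) ∈ legEdge k r v b := by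
    rw [← hab']; exact mem_legEdge.2 (Or.inr (Or.inl rfl))
  rcases mem_legEdge.1 this with h | h | ⟨j, h⟩ <;> simp_all

lemma wdeg_gt {v : V} {w : SquidVert V k r} {S : Set (SquidVert V k r)}
    (hw : ∀ i : Fin (k + 1), (Sum.inr (Sum.inl (v, i)) : SquidVert V k r) ∉ S)
    (hadj : ∀ i : Fin (k + 1), (squidOf H k r).Adj w (Sum.inr (Sum.inl (v, i)))) :
    ¬ (squidOf H k r).wdeg w S ≤ k := by
  intro hle
  have hne : (squidOf H k r).wdeg w S ∈
      {t | ∃ F, (squidOf H k r).Covers w S F ∧ F.card ≤ t} := by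
    apply Nat.sInf_mem
    refine ⟨((squidOf H k r).edges.filter (fun e => w ∈ e)).card,
      (squidOf H k r).edges.filter (fun e => w ∈ e), ⟨Finset.filter_subset _ _,
      fun e he => (Finset.mem_filter.1 he).2, ?_⟩, le_rfl⟩
    rintro u ⟨-, e, he, hwe, hue⟩ -
    exact ⟨e, Finset.mem_filter.2 ⟨he, hwe⟩, hue⟩
  obtain ⟨F, hF, hFc⟩ := hne
  have hFi : ∀ i : Fin (k + 1), legEdge k r v i ∈ F := by
    intro i
    obtain ⟨e, heF, hie⟩ := hF.2.2 _ (hadj i) (hw i)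
    have := edge_of_pendant (hF.1 heF) hie
    rwa [this] at heF
  have hcard : k + 1 ≤ F.card := by
    have hsub : ((Finset.univ : Finset (Fin (k + 1))).image
        fun i => legEdge k r v i) ⊆ F := by
      intro e he
      obtain ⟨i, -, rfl⟩ := Finset.mem_image.1 he
      exact hFi i
    have := Finset.card_le_card hsub
    rwa [Finset.card_image_of_injective _ (legEdge_injective v), Finset.card_univ,
      Fintype.card_fin] at this
  omega

lemma pendant_not_blue {D : Set (SquidVert V k r)} {v : V}
    (hD : ∀ x ∈ D, base x ≠ v) (t : ℕ) (i : Fin (k + 1)) :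
    (Sum.inr (Sum.inl (v, i)) : SquidVert V k r) ∉
      ((squidOf H k r).step k)^[t] ((squidOf H k r).closedNbhd D) := by
  induction t generalizing i with
  | zero =>
    simp only [Function.iterate_zero, id]
    rintro (hmem | ⟨w, hwD, hadj⟩)
    · exact hD _ hmem rfl
    · obtain ⟨-, e, he, hwe, hpe⟩ := hadj
      have h := edge_of_pendant he hpe
      exact hD _ hwD (base_of_mem_legEdge (h ▸ hwe))
  | succ t ih =>
    rw [Function.iterate_succ_apply']
    rintro (hmem | ⟨w, hwS, hadj, hwd⟩)
    · exact ih i hmem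
    · obtain ⟨hne, e, he, hwe, hpe⟩ := hadj
      have h := edge_of_pendant he hpe
      subst h
      rcases mem_legEdge.1 hwe with rfl | rfl | ⟨j, rfl⟩
      · exact wdeg_gt (fun i' => ih i') (fun i' => adj_pendant (Or.inl rfl) i') hwd
      · exact hne rfl
      · exact wdeg_gt (fun i' => ih i') (fun i' => adj_pendant (Or.inr ⟨j, rfl⟩) i') hwd

lemma inl_univ_dominating :
    (squidOf H k r).closedNbhd (↑((Finset.univ : Finset V).image
      (Sum.inl : V → SquidVert V k r))) = Set.univ := by
  ext x
  simp only [Set.mem_univ, iff_true, closedNbhd, Set.mem_union, Set.mem_setOf_eq]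
  rcases x with v | ⟨v, i⟩ | ⟨v, j⟩
  · exact Or.inl (by simp)
  · exact Or.inr ⟨Sum.inl v, by simp, adj_pendant (Or.inl rfl) i⟩
  · refine Or.inr ⟨Sum.inl v, by simp, ?_, legEdge k r v 0, legEdge_mem v 0, ?_, ?_⟩
    · simp
    · exact mem_legEdge.2 (Or.inl rfl)
    · exact mem_legEdge.2 (Or.inr (Or.inr ⟨j, rfl⟩))

lemma pds_card_ge {D : Finset (SquidVert V k r)} (hD : (squidOf H k r).IsPDS k ↑D) :
    Fintype.card V ≤ D.card := by
  have hit : ∀ v : V, ∃ d ∈ D, base d = v := by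
    intro v
    by_contra hc
    push_neg at hc
    obtain ⟨t, ht⟩ := hD
    have := pendant_not_blue (H := H) (D := ↑D) (v := v)
      (fun x hx => hc x hx) t 0
    rw [ht] at this
    exact this (Set.mem_univ _)
  have hsub : (Finset.univ : Finset V) ⊆ D.image base := by
    intro v _
    obtain ⟨d, hd, hdv⟩ := hit v
    exact Finset.mem_image.2 ⟨d, hd, hdv⟩
  calc Fintype.card V = (Finset.univ : Finset V).card := (Finset.card_univ).symm
    _ ≤ (D.image base).card := Finset.card_le_card hsub
    _ ≤ D.card := Finset.card_image_le

end SquidAux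

open FinHypergraph in
/-- If `H` is an `r`-uniform hypergraph and `H'` its squid hypergraph,
then `γ_p^k(H') = |V(H)|`. -/
theorem squidOf_pdn (H : FinHypergraph V) (k r : ℕ) (hr : 2 ≤ r)
    (hunif : H.Uniform r) :
    (squidOf H k r).pdn k = Fintype.card V := by
  have hmemV : Fintype.card V ∈
      {t | ∃ D : Finset (SquidVert V k r), (squidOf H k r).IsPDS k ↑D ∧ D.card ≤ t} := by
    refine ⟨(Finset.univ : Finset V).image Sum.inl, ⟨0, ?_⟩, ?_⟩
    · simpa using SquidAux.inl_univ_dominating (H := H) (k := k) (r := r)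
    · rw [Finset.card_image_of_injective _ Sum.inl_injective, Finset.card_univ]
  refine le_antisymm (Nat.sInf_le hmemV) ?_
  obtain ⟨D, hD, hcard⟩ := Nat.sInf_mem (Set.nonempty_of_mem hmemV)
  exact le_trans (SquidAux.pds_card_ge hD) hcard
end
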